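/- Let X and Y be real Hilbert spaces, let L : X → Y be a continuous ℝ-linear map with adjoint L*, let U ⊆ X and V ⊆ Y be closed linear subspaces, and let σ > 0 and τ > 0. Let F := {(x,y) ∈ X × Y : x ∈ U, L x ∈ V, y ∈ V^⊥, L* y ∈ U^⊥}, and for (x₀,y₀) ∈ X × Y define Q(x,y) := (1/σ)‖x − x₀‖² − 2⟪L(x − x₀), y − y₀⟫ + (1/τ)‖y − y₀‖². Set x̂ := P_{U ∩ L⁻¹(V)}(x₀ − σ L* y₀) and ŷ := P_{V^⊥ ∩ (L*)⁻¹(U^⊥)}(y₀ − τ L x₀). Then (x̂, ŷ) ∈ F and (x̂, ŷ) is the unique minimizer of Q over F: for every (x,y) ∈ F, Q(x̂,ŷ) ≤ Q(x,y), with equality only if (x,y) = (x̂,ŷ). -/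

import Mathlib

open scoped RealInnerProductSpace

lemma proj_sq_decomp {E : Type*} [NormedAddCommGroup E] [InnerProductSpace ℝ E]
    (K : Submodule ℝ E) [Submodule.HasOrthogonalProjection K] (u : E) {v : E} (hv : v ∈ K) :
    ‖u - v‖ ^ 2 = ‖u - (Submodule.orthogonalProjectionOnto K u : E)‖ ^ 2
      + ‖(Submodule.orthogonalProjectionOnto K u : E) - v‖ ^ 2 := by
  have h1 : u - (Submodule.orthogonalProjectionOnto K u : E) ∈ Kᗮ :=
    Submodule.sub_starProjection_mem_orthogonal (K := K) u
  have h2 : (Submodule.orthogonalProjectionOnto K u : E) - v ∈ K :=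
    K.sub_mem (Submodule.orthogonalProjectionOnto K u).2 hv
  have horth : ⟪u - (Submodule.orthogonalProjectionOnto K u : E), (Submodule.orthogonalProjectionOnto K u : E) - v⟫ = 0 := by
    rw [real_inner_comm]
    exact (Submodule.mem_orthogonal K _).1 h1 _ h2
  have hsum : u - v = (u - (Submodule.orthogonalProjectionOnto K u : E)) + ((Submodule.orthogonalProjectionOnto K u : E) - v) := by
    abel
  rw [hsum, norm_add_sq_real, horth]
  ring

theorem stmt_15
    {X Y : Type*} [NormedAddCommGroup X] [InnerProductSpace ℝ X] [CompleteSpace X]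
    [NormedAddCommGroup Y] [InnerProductSpace ℝ Y] [CompleteSpace Y]
    (L : X →L[ℝ] Y) (U : Submodule ℝ X) (V : Submodule ℝ Y)
    [Submodule.HasOrthogonalProjection U] [Submodule.HasOrthogonalProjection V]
    [Submodule.HasOrthogonalProjection (U ⊓ Submodule.comap (L : X →ₗ[ℝ] Y) V)]
    [Submodule.HasOrthogonalProjection
      (Vᗮ ⊓ Submodule.comap (ContinuousLinearMap.adjoint L : Y →ₗ[ℝ] X) Uᗮ)]
    (σ τ : ℝ) (hσ : 0 < σ) (hτ : 0 < τ)
    (x₀ : X) (y₀ : Y)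
    (Q : X → Y → ℝ)
    (hQ : ∀ x y, Q x y = (1 / σ) * ‖x - x₀‖ ^ 2 - 2 * ⟪L (x - x₀), y - y₀⟫
      + (1 / τ) * ‖y - y₀‖ ^ 2)
    (xhat : X)
    (hxhat : xhat = (Submodule.orthogonalProjectionOnto (U ⊓ Submodule.comap (L : X →ₗ[ℝ] Y) V)
      (x₀ - σ • ContinuousLinearMap.adjoint L y₀) : X))
    (yhat : Y)
    (hyhat : yhat = (Submodule.orthogonalProjectionOnto
      (Vᗮ ⊓ Submodule.comap (ContinuousLinearMap.adjoint L : Y →ₗ[ℝ] X) Uᗮ)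
      (y₀ - τ • L x₀) : Y)) :
    (xhat ∈ U ∧ L xhat ∈ V ∧ yhat ∈ Vᗮ ∧ ContinuousLinearMap.adjoint L yhat ∈ Uᗮ) ∧
      ∀ x : X, ∀ y : Y, x ∈ U → L x ∈ V → y ∈ Vᗮ → ContinuousLinearMap.adjoint L y ∈ Uᗮ →
        Q xhat yhat ≤ Q x y ∧ (Q x y = Q xhat yhat → x = xhat ∧ y = yhat) := by
  set L' := ContinuousLinearMap.adjoint L with hL'
  set A := U ⊓ Submodule.comap (L : X →ₗ[ℝ] Y) V with hA
  set B := Vᗮ ⊓ Submodule.comap (L' : Y →ₗ[ℝ] X) Uᗮ with hB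
  set a₀ := x₀ - σ • L' y₀ with ha₀
  set b₀ := y₀ - τ • L x₀ with hb₀
  have hxA : xhat ∈ A := by rw [hxhat]; exact (Submodule.orthogonalProjectionOnto A a₀).2
  have hyB : yhat ∈ B := by rw [hyhat]; exact (Submodule.orthogonalProjectionOnto B b₀).2
  have hxU : xhat ∈ U := hxA.1
  have hLxV : L xhat ∈ V := hxA.2
  have hyV : yhat ∈ Vᗮ := hyB.1
  have hLyU : L' yhat ∈ Uᗮ := hyB.2
  -- representation of Q on F
  have repr : ∀ (x : X) (y : Y), L x ∈ V → y ∈ Vᗮ →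
      Q x y = (1/σ) * ‖x - a₀‖ ^ 2 + (1/τ) * ‖y - b₀‖ ^ 2
        + (2 * ⟪L x₀, y₀⟫ - σ * ‖L' y₀‖ ^ 2 - τ * ‖L x₀‖ ^ 2) := by
    intro x y hxV hyVp
    have hxy0 : ⟪L x, y⟫ = 0 := (Submodule.mem_orthogonal V y).1 hyVp _ hxV
    have h1 : ‖x - a₀‖ ^ 2 = ‖x - x₀‖ ^ 2
        + 2 * (σ * (⟪L x, y₀⟫ - ⟪L x₀, y₀⟫)) + σ ^ 2 * ‖L' y₀‖ ^ 2 := by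
      have hx : x - a₀ = (x - x₀) + σ • L' y₀ := by rw [ha₀]; abel
      rw [hx, norm_add_sq_real, real_inner_smul_right, norm_smul]
      have : ⟪x - x₀, L' y₀⟫ = ⟪L x, y₀⟫ - ⟪L x₀, y₀⟫ := by
        rw [hL', ContinuousLinearMap.adjoint_inner_right, map_sub, inner_sub_left]
      rw [this, mul_pow]
      simp [Real.norm_eq_abs, sq_abs]
    have h2 : ‖y - b₀‖ ^ 2 = ‖y - y₀‖ ^ 2
        + 2 * (τ * (⟪L x₀, y⟫ - ⟪L x₀, y₀⟫)) + τ ^ 2 * ‖L x₀‖ ^ 2 := by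
      have hy : y - b₀ = (y - y₀) + τ • L x₀ := by rw [hb₀]; abel
      rw [hy, norm_add_sq_real, real_inner_smul_right, norm_smul]
      have : ⟪y - y₀, L x₀⟫ = ⟪L x₀, y⟫ - ⟪L x₀, y₀⟫ := by
        rw [inner_sub_left, real_inner_comm y (L x₀), real_inner_comm y₀ (L x₀)]
      rw [this, mul_pow]
      simp [Real.norm_eq_abs, sq_abs]
    have h3 : ⟪L (x - x₀), y - y₀⟫ = -⟪L x, y₀⟫ - ⟪L x₀, y⟫ + ⟪L x₀, y₀⟫ := by
      rw [map_sub, inner_sub_left, inner_sub_right, inner_sub_right, hxy0]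
      ring
    rw [hQ, h1, h2, h3]
    field_simp
    ring
  refine ⟨⟨hxU, hLxV, hyV, hLyU⟩, ?_⟩
  intro x y hx hLx hy hLy
  have hxF : x ∈ A := ⟨hx, hLx⟩
  have hyF : y ∈ B := ⟨hy, hLy⟩
  have dx : ‖a₀ - x‖ ^ 2 = ‖a₀ - xhat‖ ^ 2 + ‖xhat - x‖ ^ 2 := by
    have := proj_sq_decomp A a₀ hxF
    rwa [← hxhat] at this
  have dy : ‖b₀ - y‖ ^ 2 = ‖b₀ - yhat‖ ^ 2 + ‖yhat - y‖ ^ 2 := by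
    have := proj_sq_decomp B b₀ hyF
    rwa [← hyhat] at this
  have ex : ‖x - a₀‖ ^ 2 = ‖xhat - a₀‖ ^ 2 + ‖xhat - x‖ ^ 2 := by
    rw [norm_sub_rev x a₀, norm_sub_rev xhat a₀]; exact dx
  have ey : ‖y - b₀‖ ^ 2 = ‖yhat - b₀‖ ^ 2 + ‖yhat - y‖ ^ 2 := by
    rw [norm_sub_rev y b₀, norm_sub_rev yhat b₀]; exact dy
  have rQ : Q x y = Q xhat yhat + (1/σ) * ‖xhat - x‖ ^ 2 + (1/τ) * ‖yhat - y‖ ^ 2 := by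
    rw [repr x y hLx hy, repr xhat yhat hLxV hyV, ex, ey]
    ring
  have hσ' : (0:ℝ) < 1/σ := by positivity
  have hτ' : (0:ℝ) < 1/τ := by positivity
  have hma : (0:ℝ) ≤ (1/σ) * ‖xhat - x‖ ^ 2 := mul_nonneg hσ'.le (sq_nonneg _)
  have hmb : (0:ℝ) ≤ (1/τ) * ‖yhat - y‖ ^ 2 := mul_nonneg hτ'.le (sq_nonneg _)
  constructor
  · linarith
  · intro heq
    have h1 : (1/σ) * ‖xhat - x‖ ^ 2 = 0 := by linarith
    have h2 : (1/τ) * ‖yhat - y‖ ^ 2 = 0 := by linarith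
    have hx0 : ‖xhat - x‖ = 0 := by
      have := (mul_eq_zero.mp h1).resolve_left (one_div_ne_zero hσ.ne')
      exact pow_eq_zero_iff (by norm_num) |>.mp this
    have hy0 : ‖yhat - y‖ = 0 := by
      have := (mul_eq_zero.mp h2).resolve_left (one_div_ne_zero hτ.ne')
      exact pow_eq_zero_iff (by norm_num) |>.mp this
    exact ⟨(sub_eq_zero.mp (norm_eq_zero.mp hx0)).symm,
      (sub_eq_zero.mp (norm_eq_zero.mp hy0)).symm⟩
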